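/- Let n agents have additive valuations over a finite set M of items, and suppose each agent i has a favorite item f_i ∈ M (i.e., v_i({f_i}) ≥ v_i({g}) for every g ∈ M) such that the items f_1,...,f_n are pairwise distinct. Then there exists a complete allocation of M that is 2/3-EFX. -/

import Mathlib

/-- Rotation lemma: for any "value matrix" `u i k` (value of bundle-slot `k` to agent `i`),
there is a permutation of the slots that weakly improves everybody relative to the identity
assignment and such that some slot is unenvied (a "source"). -/
lemma rot_lemma {n : ℕ} (hn : 1 ≤ n) (u : Fin n → Fin n → ℝ) :
    ∃ π : Equiv.Perm (Fin n), (∀ i, u i i ≤ u i (π i)) ∧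
      ∃ s : Fin n, ∀ j, u j (π s) ≤ u j (π j) := by
  classical
  set T : Finset (Equiv.Perm (Fin n)) :=
    Finset.univ.filter (fun π => ∀ i, u i i ≤ u i (π i)) with hT
  have hTne : T.Nonempty := ⟨1, by simp [hT]⟩
  obtain ⟨π, hπT, hmax⟩ := T.exists_max_image (fun π => ∑ i, u i (π i)) hTne
  have hπ : ∀ i, u i i ≤ u i (π i) := by
    have := Finset.mem_filter.1 hπT
    exact this.2
  refine ⟨π, hπ, ?_⟩
  by_contra hcon
  push_neg at hcon
  choose h hh using hcon
  -- hh : ∀ s, u (h s) (π (h s)) < u (h s) (π s)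
  -- find a periodic point of h
  have hcard : Fintype.card (Fin n) < Fintype.card (Fin (n + 1)) := by simp
  obtain ⟨a, b, hab, heq⟩ :=
    Fintype.exists_ne_map_eq_of_card_lt (fun k : Fin (n + 1) => h^[(k : ℕ)] (⟨0, hn⟩ : Fin n))
      hcard
  have hne' : (a : ℕ) ≠ (b : ℕ) := fun hc => hab (Fin.val_injective hc)
  obtain ⟨c, d, hcd, hceq⟩ : ∃ c d : ℕ, c < d ∧ h^[c] (⟨0, hn⟩ : Fin n) = h^[d] (⟨0, hn⟩ : Fin n) := by
    rcases hne'.lt_or_gt with hlt | hlt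
    · exact ⟨a, b, hlt, heq⟩
    · exact ⟨b, a, hlt, heq.symm⟩
  set x : Fin n := h^[c] (⟨0, hn⟩ : Fin n) with hx
  have hper : h^[d - c] x = x := by
    have h5 : h^[(d - c) + c] (⟨0, hn⟩ : Fin n) = x := by
      have hba : (d - c) + c = d := by omega
      rw [hba, ← hceq]
    rw [Function.iterate_add_apply] at h5
    exact h5
  have hppos : 0 < d - c := by omega
  have hperiodic : Function.IsPeriodicPt h (d - c) x := hper
  set m : ℕ := Function.minimalPeriod h x with hm
  have hmpos : 0 < m := hperiodic.minimalPeriod_pos hppos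
  set L : List (Fin n) := (List.range m).map (fun k => h^[k] x) with hL
  have hlen : L.length = m := by simp [hL]
  have hNodup : L.Nodup := by
    refine List.Nodup.map_on ?_ List.nodup_range
    intro p hp q hq hpq
    exact Function.iterate_injOn_Iio_minimalPeriod
      (by simpa using List.mem_range.1 hp) (by simpa using List.mem_range.1 hq) hpq
  have hmemL : ∀ y, y ∈ L ↔ ∃ k, k < m ∧ h^[k] x = y := by
    intro y
    constructor
    · intro hy
      obtain ⟨k, hk, hky⟩ := List.mem_map.1 hy
      exact ⟨k, List.mem_range.1 hk, hky⟩
    · rintro ⟨k, hk, rfl⟩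
      exact List.mem_map.2 ⟨k, List.mem_range.2 hk, rfl⟩
  have hxL : x ∈ L := (hmemL x).2 ⟨0, hmpos, rfl⟩
  set τ : Equiv.Perm (Fin n) := L.formPerm with hτdef
  have hτ : ∀ y ∈ L, τ y = h y := by
    intro y hy
    obtain ⟨k, hk, rfl⟩ := (hmemL y).1 hy
    have hkL : k < L.length := by rw [hlen]; exact hk
    have hLk : L[k]'hkL = h^[k] x := by simp [hL]
    have hres := List.formPerm_apply_getElem L hNodup k hkL
    rw [hLk] at hres
    have h2 : L[(k + 1) % L.length]'(Nat.mod_lt _ (by omega)) = h^[(k + 1) % m] x := by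
      simp [hL, hlen]
    rw [hres, h2]
    have : h^[(k + 1) % m] x = h^[k + 1] x := Function.iterate_mod_minimalPeriod_eq
    rw [this, Function.iterate_succ_apply']
  have hclosed : ∀ y ∈ L, h y ∈ L := by
    intro y hy
    rw [← hτ y hy]
    exact List.formPerm_apply_mem_of_mem hy
  have hsymm_mem : ∀ y, y ∈ L → τ.symm y ∈ L := by
    intro y hy
    by_contra hz
    have h1 : τ (τ.symm y) = τ.symm y := List.formPerm_apply_of_notMem hz
    rw [Equiv.apply_symm_apply] at h1
    rw [h1] at hy
    exact hz hy
  have hsymm_fix : ∀ y, y ∉ L → τ.symm y = y := by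
    intro y hy
    by_contra hne
    have h1 : τ.symm y ∈ L := by
      by_contra h2
      have h3 : τ (τ.symm y) = τ.symm y := List.formPerm_apply_of_notMem h2
      rw [Equiv.apply_symm_apply] at h3
      exact hne h3.symm
    have h4 : τ (τ.symm y) ∈ L := List.formPerm_apply_mem_of_mem h1
    rw [Equiv.apply_symm_apply] at h4
    exact hy h4
  set π' : Equiv.Perm (Fin n) := τ.symm.trans π with hπ'
  have hπ'app : ∀ i, π' i = π (τ.symm i) := fun i => rfl
  have key : ∀ i, u i (π i) ≤ u i (π' i) := by
    intro i
    by_cases hi : i ∈ L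
    · have hz : τ.symm i ∈ L := hsymm_mem i hi
      have hzi : h (τ.symm i) = i := by
        have h6 : τ (τ.symm i) = i := Equiv.apply_symm_apply _ _
        rw [hτ _ hz] at h6
        exact h6
      have := hh (τ.symm i)
      rw [hzi] at this
      rw [hπ'app]
      exact le_of_lt this
    · rw [hπ'app, hsymm_fix i hi]
  have keyx : u x (π x) < u x (π' x) := by
    have hz : τ.symm x ∈ L := hsymm_mem x hxL
    have hzi : h (τ.symm x) = x := by
      have h6 : τ (τ.symm x) = x := Equiv.apply_symm_apply _ _
      rw [hτ _ hz] at h6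
      exact h6
    have := hh (τ.symm x)
    rw [hzi] at this
    rw [hπ'app]
    exact this
  have hπ'T : π' ∈ T := by
    rw [hT, Finset.mem_filter]
    exact ⟨Finset.mem_univ _, fun i => le_trans (hπ i) (key i)⟩
  have hΦ : (∑ i, u i (π i)) < ∑ i, u i (π' i) :=
    Finset.sum_lt_sum (fun i _ => key i) ⟨x, Finset.mem_univ x, keyx⟩
  exact absurd (hmax π' hπ'T) (not_le.2 hΦ)

/-- Main induction: completing a partial allocation that satisfies the invariants. -/
lemma efx_aux {ι : Type*} [DecidableEq ι] (n : ℕ) (hn : 1 ≤ n)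
    (M : Finset ι) (w : Fin n → ι → ℝ)
    (hw : ∀ i, ∀ g ∈ M, 0 ≤ w i g)
    (f : Fin n → ι) (hfM : ∀ i, f i ∈ M)
    (hfav : ∀ i, ∀ g ∈ M, w i g ≤ w i (f i)) :
    ∀ P : Finset ι, ∀ B : Fin n → Finset ι,
      (∀ i, B i ⊆ M) → P ⊆ M →
      (∀ i j, i ≠ j → Disjoint (B i) (B j)) →
      (∀ i, Disjoint (B i) P) →
      (∀ g ∈ M, (∃ i, g ∈ B i) ∨ g ∈ P) →
      (∀ j, w j (f j) ≤ ∑ x ∈ B j, w j x) →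
      (∀ j, B j = {f j} ∨ ∀ g ∈ P, 2 * w j g ≤ ∑ x ∈ B j, w j x) →
      (∀ i j, i ≠ j → ∀ g ∈ B i,
        ∑ x ∈ (B i).erase g, w j x ≤ (3/2 : ℝ) * ∑ x ∈ B j, w j x) →
      ∃ A : Fin n → Finset ι,
        (∀ i, A i ⊆ M) ∧
        (∀ g ∈ M, ∃ i, g ∈ A i) ∧
        (∀ i j, i ≠ j → Disjoint (A i) (A j)) ∧
        (∀ i j, ∀ g ∈ A j,
          (2/3 : ℝ) * ∑ x ∈ (A j).erase g, w i x ≤ ∑ x ∈ A i, w i x) := by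
  classical
  have hsum_nonneg : ∀ (k : Fin n) (S : Finset ι), S ⊆ M → 0 ≤ ∑ x ∈ S, w k x :=
    fun k S hS => Finset.sum_nonneg (fun x hx => hw k x (hS hx))
  have hmono : ∀ (k : Fin n) (S T : Finset ι), S ⊆ T → T ⊆ M →
      ∑ x ∈ S, w k x ≤ ∑ x ∈ T, w k x := by
    intro k S T hST hTM
    exact Finset.sum_le_sum_of_subset_of_nonneg hST (fun x hx _ => hw k x (hTM hx))
  intro P
  induction P using Finset.strongInduction with
  | _ P ih =>
  intro B hBM hPM hdis hBP hcov hHT hH2 hH3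
  rcases eq_or_ne P ∅ with rfl | hPne
  · -- base case: pool empty
    refine ⟨B, hBM, ?_, hdis, ?_⟩
    · intro g hg
      rcases hcov g hg with ⟨i, hi⟩ | habs
      · exact ⟨i, hi⟩
      · simp at habs
    · intro i j g hg
      have herase : (B j).erase g ⊆ B j := Finset.erase_subset _ _
      rcases eq_or_ne j i with h | hne
      · subst h
        have hnn : 0 ≤ ∑ x ∈ (B j).erase g, w j x := hsum_nonneg j _ (herase.trans (hBM j))
        have h1 := hmono j _ _ herase (hBM j)
        linarith
      · have hnn : 0 ≤ ∑ x ∈ (B j).erase g, w i x := hsum_nonneg i _ (herase.trans (hBM j))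
        have := hH3 j i hne g hg
        linarith
  · have hPne' : P.Nonempty := Finset.nonempty_iff_ne_empty.2 hPne
    by_cases hsing : ∃ j, B j = {f j}
    · -- a seed agent still holds exactly its favorite: give it its best pool item
      obtain ⟨j, hj⟩ := hsing
      obtain ⟨g, hgP, hgmax⟩ := P.exists_max_image (w j) hPne'
      have hgM : g ∈ M := hPM hgP
      have hgnB : ∀ i, g ∉ B i := fun i => Finset.disjoint_right.1 (hBP i) hgP
      set B' : Fin n → Finset ι := Function.update B j (insert g (B j)) with hB'
      have hB'j : B' j = insert g (B j) := Function.update_self _ _ _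
      have hB'k : ∀ k, k ≠ j → B' k = B k := fun k hk => Function.update_of_ne hk _ _
      have hsumj : ∀ k : Fin n, ∑ x ∈ B' j, w k x = w k g + ∑ x ∈ B j, w k x := by
        intro k
        rw [hB'j, Finset.sum_insert (hgnB j)]
      have hsubB' : ∀ i, B i ⊆ B' i := by
        intro i
        rcases eq_or_ne i j with rfl | hij
        · rw [hB'j]; exact Finset.subset_insert _ _
        · rw [hB'k i hij]
      have hB'M : ∀ i, B' i ⊆ M := by
        intro i
        rcases eq_or_ne i j with rfl | hij
        · rw [hB'j]; exact Finset.insert_subset hgM (hBM i)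
        · rw [hB'k i hij]; exact hBM i
      refine ih (P.erase g) (Finset.erase_ssubset hgP) B' hB'M
        ((Finset.erase_subset _ _).trans hPM) ?_ ?_ ?_ ?_ ?_ ?_
      · -- pairwise disjoint
        intro i k hik
        rcases eq_or_ne i j with rfl | hij
        · rw [hB'j, hB'k k (Ne.symm hik)]
          exact Finset.disjoint_insert_left.2 ⟨hgnB k, hdis i k hik⟩
        · rcases eq_or_ne k j with rfl | hkj
          · rw [hB'j, hB'k i hij]
            exact (Finset.disjoint_insert_left.2 ⟨hgnB i, hdis k i (Ne.symm hik)⟩).symm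
          · rw [hB'k i hij, hB'k k hkj]; exact hdis i k hik
      · -- disjoint from new pool
        intro i
        rcases eq_or_ne i j with rfl | hij
        · rw [hB'j]
          refine Finset.disjoint_insert_left.2 ⟨Finset.notMem_erase _ _, ?_⟩
          exact Finset.disjoint_of_subset_right (Finset.erase_subset _ _) (hBP i)
        · rw [hB'k i hij]
          exact Finset.disjoint_of_subset_right (Finset.erase_subset _ _) (hBP i)
      · -- coverage
        intro y hy
        rcases hcov y hy with ⟨i, hi⟩ | hyP
        · exact Or.inl ⟨i, hsubB' i hi⟩
        · rcases eq_or_ne y g with rfl | hyg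
          · exact Or.inl ⟨j, by rw [hB'j]; exact Finset.mem_insert_self _ _⟩
          · exact Or.inr (Finset.mem_erase.2 ⟨hyg, hyP⟩)
      · -- favorite lower bound
        intro k
        rcases eq_or_ne k j with rfl | hkj
        · rw [hsumj]
          have := hHT k
          have := hw k g hgM
          linarith
        · rw [hB'k k hkj]; exact hHT k
      · -- H2'
        intro k
        rcases eq_or_ne k j with rfl | hkj
        · refine Or.inr ?_
          intro g' hg'
          have hg'P : g' ∈ P := Finset.mem_of_mem_erase hg'
          have h1 : w k g' ≤ w k g := hgmax g' hg'P
          have h2 : w k g' ≤ w k (f k) := hfav k g' (hPM hg'P)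
          have h3 : ∑ x ∈ B k, w k x = w k (f k) := by rw [hj, Finset.sum_singleton]
          rw [hsumj]
          linarith
        · rcases hH2 k with hcase | hcase
          · rw [hB'k k hkj]; exact Or.inl hcase
          · refine Or.inr ?_
            intro g' hg'
            rw [hB'k k hkj]
            exact hcase g' (Finset.mem_of_mem_erase hg')
      · -- H3
        intro i k hik g' hg'
        rcases eq_or_ne i j with rfl | hij
        · -- bundle of i is {f i, g}
          have hki : k ≠ i := Ne.symm hik
          have hgfj : g ∉ ({f i} : Finset ι) := by
            intro hmem
            have hgf : g = f i := Finset.mem_singleton.1 hmem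
            exact hgnB i (by rw [hgf, hj]; exact Finset.mem_singleton_self _)
          have hBj' : B' i = insert g ({f i} : Finset ι) := by rw [hB'j, hj]
          rw [hBj'] at hg'
          have hsum2 : ∑ x ∈ insert g ({f i} : Finset ι), w k x = w k g + w k (f i) := by
            rw [Finset.sum_insert hgfj, Finset.sum_singleton]
          have herase : (∑ x ∈ (insert g ({f i} : Finset ι)).erase g', w k x) + w k g'
              = ∑ x ∈ insert g ({f i} : Finset ι), w k x := Finset.sum_erase_add _ _ hg'
          have hsingle : ∑ x ∈ (insert g ({f i} : Finset ι)).erase g', w k x ≤ w k (f k) := by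
            rcases Finset.mem_insert.1 hg' with rfl | hfi
            · rw [hsum2] at herase
              have := hfav k (f i) (hfM i)
              linarith
            · have hgf' : g' = f i := Finset.mem_singleton.1 hfi
              subst hgf'
              rw [hsum2] at herase
              have := hfav k g hgM
              linarith
          have hkB : w k (f k) ≤ ∑ x ∈ B k, w k x := hHT k
          have hkB0 : 0 ≤ ∑ x ∈ B k, w k x := le_trans (hw k (f k) (hfM k)) hkB
          rw [hBj', hB'k k hki]
          linarith
        · rcases eq_or_ne k j with rfl | hkj
          · rw [hB'k i hij] at hg' ⊢
            have := hH3 i k hik g' hg'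
            have hwg : 0 ≤ w k g := hw k g hgM
            rw [hsumj]
            linarith
          · rw [hB'k i hij] at hg' ⊢
            rw [hB'k k hkj]
            exact hH3 i k hik g' hg'
    · -- no seed-singleton left: everyone satisfies the (b) condition
      push_neg at hsing
      have hb : ∀ k, ∀ g ∈ P, 2 * w k g ≤ ∑ x ∈ B k, w k x :=
        fun k => (hH2 k).resolve_left (hsing k)
      obtain ⟨π, hπ1, s, hs⟩ := rot_lemma hn (fun i k => ∑ x ∈ B k, w i x)
      obtain ⟨g, hgP⟩ := hPne'
      have hgM : g ∈ M := hPM hgP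
      set C : Fin n → Finset ι := fun i => B (π i) with hC
      have hCM : ∀ i, C i ⊆ M := fun i => hBM (π i)
      have hCHT : ∀ k, w k (f k) ≤ ∑ x ∈ C k, w k x :=
        fun k => le_trans (hHT k) (hπ1 k)
      have hCb : ∀ k, ∀ g' ∈ P, 2 * w k g' ≤ ∑ x ∈ C k, w k x :=
        fun k g' hg' => le_trans (hb k g' hg') (hπ1 k)
      have hCdis : ∀ i k, i ≠ k → Disjoint (C i) (C k) :=
        fun i k hik => hdis (π i) (π k) (fun hc => hik (π.injective hc))
      have hCP : ∀ i, Disjoint (C i) P := fun i => hBP (π i)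
      have hCnn : ∀ k i, (0:ℝ) ≤ ∑ x ∈ C i, w k x := fun k i => hsum_nonneg k _ (hCM i)
      have hCH3 : ∀ i k, i ≠ k → ∀ g' ∈ C i,
          ∑ x ∈ (C i).erase g', w k x ≤ (3/2 : ℝ) * ∑ x ∈ C k, w k x := by
        intro i k hik g' hg'
        rcases eq_or_ne (π i) k with hpi | hpi
        · have h1 : ∑ x ∈ (C i).erase g', w k x ≤ ∑ x ∈ C i, w k x :=
            hmono k _ _ (Finset.erase_subset _ _) (hCM i)
          have h2 : ∑ x ∈ C i, w k x = ∑ x ∈ B k, w k x := by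
            rw [show C i = B (π i) from rfl, hpi]
          have h3 : ∑ x ∈ B k, w k x ≤ ∑ x ∈ C k, w k x := hπ1 k
          have h4 := hCnn k k
          linarith
        · have h1 := hH3 (π i) k hpi g' hg'
          have h3 : ∑ x ∈ B k, w k x ≤ ∑ x ∈ C k, w k x := hπ1 k
          have : ∑ x ∈ (C i).erase g', w k x ≤ (3/2 : ℝ) * ∑ x ∈ B k, w k x := h1
          linarith
      have hgnC : ∀ i, g ∉ C i := fun i => Finset.disjoint_right.1 (hCP i) hgP
      set B' : Fin n → Finset ι := Function.update C s (insert g (C s)) with hB'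
      have hB's : B' s = insert g (C s) := Function.update_self _ _ _
      have hB'k : ∀ k, k ≠ s → B' k = C k := fun k hk => Function.update_of_ne hk _ _
      have hsums : ∀ k : Fin n, ∑ x ∈ B' s, w k x = w k g + ∑ x ∈ C s, w k x := by
        intro k
        rw [hB's, Finset.sum_insert (hgnC s)]
      have hsubB' : ∀ i, C i ⊆ B' i := by
        intro i
        rcases eq_or_ne i s with rfl | his
        · rw [hB's]; exact Finset.subset_insert _ _
        · rw [hB'k i his]
      have hB'M : ∀ i, B' i ⊆ M := by
        intro i
        rcases eq_or_ne i s with rfl | his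
        · rw [hB's]; exact Finset.insert_subset hgM (hCM i)
        · rw [hB'k i his]; exact hCM i
      refine ih (P.erase g) (Finset.erase_ssubset hgP) B' hB'M
        ((Finset.erase_subset _ _).trans hPM) ?_ ?_ ?_ ?_ ?_ ?_
      · intro i k hik
        rcases eq_or_ne i s with rfl | his
        · rw [hB's, hB'k k (Ne.symm hik)]
          exact Finset.disjoint_insert_left.2 ⟨hgnC k, hCdis i k hik⟩
        · rcases eq_or_ne k s with rfl | hks
          · rw [hB's, hB'k i his]
            exact (Finset.disjoint_insert_left.2 ⟨hgnC i, hCdis k i (Ne.symm hik)⟩).symm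
          · rw [hB'k i his, hB'k k hks]; exact hCdis i k hik
      · intro i
        rcases eq_or_ne i s with rfl | his
        · rw [hB's]
          refine Finset.disjoint_insert_left.2 ⟨Finset.notMem_erase _ _, ?_⟩
          exact Finset.disjoint_of_subset_right (Finset.erase_subset _ _) (hCP i)
        · rw [hB'k i his]
          exact Finset.disjoint_of_subset_right (Finset.erase_subset _ _) (hCP i)
      · intro y hy
        rcases hcov y hy with ⟨i, hi⟩ | hyP
        · refine Or.inl ⟨π.symm i, hsubB' (π.symm i) ?_⟩
          rw [hC]
          simpa [Equiv.apply_symm_apply] using hi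
        · rcases eq_or_ne y g with rfl | hyg
          · exact Or.inl ⟨s, by rw [hB's]; exact Finset.mem_insert_self _ _⟩
          · exact Or.inr (Finset.mem_erase.2 ⟨hyg, hyP⟩)
      · intro k
        rcases eq_or_ne k s with rfl | hks
        · rw [hsums]
          have := hCHT k
          have := hw k g hgM
          linarith
        · rw [hB'k k hks]; exact hCHT k
      · intro k
        refine Or.inr ?_
        intro g' hg'
        have hg'P : g' ∈ P := Finset.mem_of_mem_erase hg'
        rcases eq_or_ne k s with rfl | hks
        · rw [hsums]
          have := hCb k g' hg'P
          have := hw k g hgM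
          linarith
        · rw [hB'k k hks]
          exact hCb k g' hg'P
      · intro i k hik g' hg'
        rcases eq_or_ne i s with rfl | his
        · have hks : k ≠ i := Ne.symm hik
          rw [hB's] at hg'
          have h1 : ∑ x ∈ (insert g (C i)).erase g', w k x ≤ ∑ x ∈ insert g (C i), w k x := by
            refine hmono k _ _ (Finset.erase_subset _ _) ?_
            exact Finset.insert_subset hgM (hCM i)
          have h2 : ∑ x ∈ insert g (C i), w k x = w k g + ∑ x ∈ C i, w k x :=
            Finset.sum_insert (hgnC i)
          have h3 : 2 * w k g ≤ ∑ x ∈ C k, w k x := hCb k g hgP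
          have h4 : ∑ x ∈ C i, w k x ≤ ∑ x ∈ C k, w k x := hs k
          rw [hB's, hB'k k hks]
          linarith
        · rcases eq_or_ne k s with rfl | hks
          · rw [hB'k i his] at hg' ⊢
            have := hCH3 i k hik g' hg'
            have hwg : 0 ≤ w k g := hw k g hgM
            rw [hsums]
            linarith
          · rw [hB'k i his] at hg' ⊢
            rw [hB'k k hks]
            exact hCH3 i k hik g' hg'

/-- Distinct top items: if each agent `i` has a favorite item `f i` and these favorite
items are pairwise distinct, then a 2/3-EFX complete allocation exists. -/
theorem twothirds_efx_distinct_top {ι : Type*} [DecidableEq ι] (n : ℕ) (hn : 1 ≤ n)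
    (M : Finset ι) (w : Fin n → ι → ℝ)
    (hw : ∀ i, ∀ g ∈ M, 0 ≤ w i g)
    (f : Fin n → ι) (hfM : ∀ i, f i ∈ M) (hfinj : Function.Injective f)
    (hfav : ∀ i, ∀ g ∈ M, w i g ≤ w i (f i)) :
    ∃ A : Fin n → Finset ι,
      (∀ i, A i ⊆ M) ∧
      (∀ g ∈ M, ∃ i, g ∈ A i) ∧
      (∀ i j, i ≠ j → Disjoint (A i) (A j)) ∧
      (∀ i j, ∀ g ∈ A j,
        (2/3 : ℝ) * ∑ x ∈ (A j).erase g, w i x ≤ ∑ x ∈ A i, w i x) := by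
  classical
  set P : Finset ι := M \ Finset.univ.image f with hP
  set B : Fin n → Finset ι := fun i => {f i} with hB
  refine efx_aux n hn M w hw f hfM hfav P B ?_ ?_ ?_ ?_ ?_ ?_ ?_ ?_
  · intro i
    simp [hB, Finset.singleton_subset_iff, hfM i]
  · exact Finset.sdiff_subset
  · intro i j hij
    simp only [hB, Finset.disjoint_singleton]
    exact fun h => hij (hfinj h)
  · intro i
    simp only [hB, Finset.disjoint_singleton_left, hP]
    intro hmem
    have : f i ∈ Finset.univ.image f := Finset.mem_image_of_mem f (Finset.mem_univ i)
    exact (Finset.mem_sdiff.1 hmem).2 this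
  · intro g hg
    by_cases hgf : g ∈ Finset.univ.image f
    · obtain ⟨i, _, rfl⟩ := Finset.mem_image.1 hgf
      exact Or.inl ⟨i, by simp [hB]⟩
    · exact Or.inr (Finset.mem_sdiff.2 ⟨hg, hgf⟩)
  · intro j
    simp [hB]
  · intro j
    exact Or.inl rfl
  · intro i j hij g hg
    simp only [hB, Finset.mem_singleton] at hg
    subst hg
    have : ({f i} : Finset ι).erase (f i) = ∅ := by simp
    rw [hB]
    simp only [this]
    rw [Finset.sum_empty, Finset.sum_singleton]
    have h0 : 0 ≤ w j (f j) := hw j (f j) (hfM j)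
    linarith
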